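/- For any two 2×2 density matrices ρ₁, ρ₂, fidelity equals super-fidelity: (tr√(√ρ₁ ρ₂ √ρ₁))² = tr(ρ₁ρ₂) + √((1 - tr ρ₁²)(1 - tr ρ₂²)). -/

import Mathlib

open Matrix ComplexOrder

attribute [local instance] Classical.propDecidable

/-- The positive semidefinite square root of a positive semidefinite matrix
(the definition removed from Mathlib, restored with its old value). -/
noncomputable def Matrix.PosSemidef.sqrt {n : Type*} [Fintype n] [DecidableEq n] {𝕜 : Type*}
    [RCLike 𝕜] {A : Matrix n n 𝕜} (hA : A.PosSemidef) : Matrix n n 𝕜 :=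
  hA.1.eigenvectorUnitary.1 * diagonal ((↑) ∘ Real.sqrt ∘ hA.1.eigenvalues) *
  (star hA.1.eigenvectorUnitary : Matrix n n 𝕜)

/-- Fidelity `F(ρ₁,ρ₂) = (tr √(√ρ₁ ρ₂ √ρ₁))²` (0 when not defined). -/
noncomputable def fid {n : Type*} [Fintype n] [DecidableEq n] (ρ₁ ρ₂ : Matrix n n ℂ) : ℝ :=
  if h1 : ρ₁.PosSemidef then
    if h2 : (h1.sqrt * ρ₂ * h1.sqrt).PosSemidef then (h2.sqrt.trace).re ^ 2 else 0
  else 0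

lemma Matrix.PosSemidef.posSemidef_sqrt {n : Type*} [Fintype n] [DecidableEq n] {𝕜 : Type*}
    [RCLike 𝕜] {A : Matrix n n 𝕜} (hA : A.PosSemidef) : hA.sqrt.PosSemidef := by
  have hD : (diagonal ((↑) ∘ Real.sqrt ∘ hA.1.eigenvalues) : Matrix n n 𝕜).PosSemidef := by
    rw [posSemidef_diagonal_iff]
    intro i
    simp [Real.sqrt_nonneg]
  have := hD.mul_mul_conjTranspose_same (hA.1.eigenvectorUnitary : Matrix n n 𝕜)
  simpa [Matrix.PosSemidef.sqrt, Matrix.star_eq_conjTranspose] using this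

lemma Matrix.PosSemidef.sqrt_mul_self {n : Type*} [Fintype n] [DecidableEq n] {𝕜 : Type*}
    [RCLike 𝕜] {A : Matrix n n 𝕜} (hA : A.PosSemidef) : hA.sqrt * hA.sqrt = A := by
  have hsp := hA.1.spectral_theorem
  rw [Unitary.conjStarAlgAut_apply] at hsp
  conv_rhs => rw [hsp]
  simp only [Matrix.PosSemidef.sqrt]
  have hu : (star hA.1.eigenvectorUnitary : Matrix n n 𝕜) * (hA.1.eigenvectorUnitary : Matrix n n 𝕜) = 1 :=
    Unitary.coe_star_mul_self _
  rw [show ∀ a b c d e f : Matrix n n 𝕜, a * b * c * (d * e * f) = a * b * (c * d) * e * f by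
    intro a b c d e f; simp only [Matrix.mul_assoc], hu, Matrix.mul_one]
  have hd : (diagonal ((↑) ∘ Real.sqrt ∘ hA.1.eigenvalues) : Matrix n n 𝕜) *
      diagonal ((↑) ∘ Real.sqrt ∘ hA.1.eigenvalues) = diagonal (RCLike.ofReal ∘ hA.1.eigenvalues) := by
    rw [diagonal_mul_diagonal]
    congr 1
    funext i
    simp only [Function.comp_apply]
    rw [← RCLike.ofReal_mul, Real.mul_self_sqrt (hA.eigenvalues_nonneg i)]
  rw [Matrix.mul_assoc (hA.1.eigenvectorUnitary : Matrix n n 𝕜), hd]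

lemma trace_sq_fin_two (A : Matrix (Fin 2) (Fin 2) ℂ) :
    (A * A).trace = A.trace ^ 2 - 2 * A.det := by
  simp [Matrix.trace_fin_two, Matrix.det_fin_two, Matrix.mul_apply, Fin.sum_univ_two]
  ring

lemma psd_det_nonneg {n : Type*} [Fintype n] [DecidableEq n] {A : Matrix n n ℂ}
    (hA : A.PosSemidef) : 0 ≤ A.det := by
  rw [hA.isHermitian.det_eq_prod_eigenvalues]
  apply Finset.prod_nonneg
  intro i _
  simpa using hA.eigenvalues_nonneg i

lemma psd_trace_nonneg {n : Type*} [Fintype n] [DecidableEq n] {A : Matrix n n ℂ}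
    (hA : A.PosSemidef) : 0 ≤ A.trace := by
  rw [Matrix.trace]
  apply Finset.sum_nonneg
  intro i _
  exact hA.diag_nonneg

lemma nonneg_re_coe {z : ℂ} (hz : 0 ≤ z) : (z.re : ℂ) = z := by
  rw [Complex.le_def] at hz
  have him : z.im = 0 := by simpa using hz.2.symm
  exact Complex.ext rfl (by simp [him])

theorem fidelity_eq_superFidelity_qubit (ρ₁ ρ₂ : Matrix (Fin 2) (Fin 2) ℂ)
    (h1 : ρ₁.PosSemidef) (h2 : ρ₂.PosSemidef)
    (t1 : ρ₁.trace = 1) (t2 : ρ₂.trace = 1) :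
    fid ρ₁ ρ₂ = ((ρ₁ * ρ₂).trace).re +
      Real.sqrt ((1 - ((ρ₁ * ρ₁).trace).re) * (1 - ((ρ₂ * ρ₂).trace).re)) := by
  have hM : (h1.sqrt * ρ₂ * h1.sqrt).PosSemidef := by
    have := h2.conjTranspose_mul_mul_same h1.sqrt
    rwa [h1.posSemidef_sqrt.isHermitian.eq] at this
  rw [fid, dif_pos h1, dif_pos hM]
  set s₁ := h1.sqrt with hs₁
  set M := s₁ * ρ₂ * s₁ with hMdef
  set s := hM.sqrt with hs
  -- trace of s is a nonneg real
  have hts : 0 ≤ s.trace := psd_trace_nonneg hM.posSemidef_sqrt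
  have htsc : ((s.trace.re : ℂ)) = s.trace := nonneg_re_coe hts
  -- key identity in ℂ: (tr s)^2 = tr M + 2 det s
  have hss : s * s = M := hM.sqrt_mul_self
  have key : s.trace ^ 2 = M.trace + 2 * s.det := by
    have := trace_sq_fin_two s
    rw [hss] at this
    linear_combination -this
  -- trace of M equals trace (ρ₁ ρ₂)
  have htrM : M.trace = (ρ₁ * ρ₂).trace := by
    have : M.trace = (ρ₂ * (s₁ * s₁)).trace := by
      rw [hMdef, Matrix.trace_mul_comm, ← Matrix.mul_assoc, Matrix.trace_mul_comm]
    rw [this, h1.sqrt_mul_self, Matrix.trace_mul_comm]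
  -- det s is nonneg real with square det ρ₁ * det ρ₂
  have hds : 0 ≤ s.det := psd_det_nonneg hM.posSemidef_sqrt
  have hdsc : ((s.det.re : ℂ)) = s.det := nonneg_re_coe hds
  have hdM : s.det ^ 2 = ρ₁.det * ρ₂.det := by
    have h1' : s₁.det * s₁.det = ρ₁.det := by
      rw [← Matrix.det_mul, h1.sqrt_mul_self]
    have : s.det ^ 2 = M.det := by rw [sq, ← Matrix.det_mul, hss]
    rw [this, hMdef, Matrix.det_mul, Matrix.det_mul]
    linear_combination ρ₂.det * h1'
  have hd1 : 0 ≤ ρ₁.det := psd_det_nonneg h1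
  have hd2 : 0 ≤ ρ₂.det := psd_det_nonneg h2
  have hd1c : ((ρ₁.det.re : ℂ)) = ρ₁.det := nonneg_re_coe hd1
  have hd2c : ((ρ₂.det.re : ℂ)) = ρ₂.det := nonneg_re_coe hd2
  have hd1r : 0 ≤ ρ₁.det.re := by rw [Complex.le_def] at hd1; simpa using hd1.1
  have hd2r : 0 ≤ ρ₂.det.re := by rw [Complex.le_def] at hd2; simpa using hd2.1
  have hdsr : 0 ≤ s.det.re := by rw [Complex.le_def] at hds; simpa using hds.1
  -- real version of key
  have keyR : s.trace.re ^ 2 = (ρ₁ * ρ₂).trace.re + 2 * s.det.re := by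
    have h := congrArg Complex.re key
    rw [← htsc, ← hdsc, htrM] at h
    simpa [← Complex.ofReal_pow] using h
  -- det identity, real version
  have hdMr : s.det.re ^ 2 = ρ₁.det.re * ρ₂.det.re := by
    have h := congrArg Complex.re hdM
    rw [← hdsc, ← hd1c, ← hd2c] at h
    simpa [← Complex.ofReal_pow] using h
  -- trace-square identities
  have e1 : (ρ₁ * ρ₁).trace.re = 1 - 2 * ρ₁.det.re := by
    have h := trace_sq_fin_two ρ₁
    rw [t1, ← hd1c] at h
    have h' := congrArg Complex.re h
    simpa using h'
  have e2 : (ρ₂ * ρ₂).trace.re = 1 - 2 * ρ₂.det.re := by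
    have h := trace_sq_fin_two ρ₂
    rw [t2, ← hd2c] at h
    have h' := congrArg Complex.re h
    simpa using h'
  have hsq : (2 * s.det.re) ^ 2 =
      (1 - (ρ₁ * ρ₁).trace.re) * (1 - (ρ₂ * ρ₂).trace.re) := by
    rw [e1, e2]
    ring_nf
    nlinarith [hdMr]
  have : Real.sqrt ((1 - (ρ₁ * ρ₁).trace.re) * (1 - (ρ₂ * ρ₂).trace.re))
      = 2 * s.det.re := by
    rw [← hsq, Real.sqrt_sq (by positivity)]
  rw [this, keyR]
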